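/- Let Ω ⊂ ℝ² be open bounded with Lipschitz boundary, and let (ψ, A) be a (weak) solution of the Ginzburg–Landau equation −(∇ − iκHA)²ψ = κ²(1 − |ψ|²)ψ in Ω with Neumann boundary condition ν·(∇ − iκHA)ψ = 0 on ∂Ω. Then for any real-valued f ∈ C²(Ω̄), ∫_Ω |(∇ − iκHA)(fψ)|² dx = κ² ∫_Ω f² (1 − |ψ|²)|ψ|² dx + ∫_Ω |∇f|² |ψ|² dx. -/

import Mathlib

open MeasureTheory

/-- The magnetic gradient `(∇ - iA)u` of `u : ℝ² → ℂ`, as a pair of complex components. -/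
noncomputable def magGrad (A : ℝ × ℝ → ℝ × ℝ) (u : ℝ × ℝ → ℂ) (x : ℝ × ℝ) : ℂ × ℂ :=
  (fderiv ℝ u x (1, 0) - Complex.I * ((A x).1 : ℂ) * u x,
   fderiv ℝ u x (0, 1) - Complex.I * ((A x).2 : ℂ) * u x)

/-- The squared norm `|(∇ - iA)u|²` of the magnetic gradient. -/
noncomputable def magGradSq (A : ℝ × ℝ → ℝ × ℝ) (u : ℝ × ℝ → ℂ) (x : ℝ × ℝ) : ℝ :=
  ‖(magGrad A u x).1‖ ^ 2 + ‖(magGrad A u x).2‖ ^ 2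

/-- `(ψ, A)` is a weak solution of the Ginzburg-Landau equation
`-(∇ - iκHA)²ψ = κ²(1 - |ψ|²)ψ` in `Ω` with the Neumann magnetic boundary condition
`ν·(∇ - iκHA)ψ = 0` on `∂Ω`: for every test function `φ` (not required to vanish at the
boundary, so that the Neumann condition is encoded as the natural boundary condition),
`∫_Ω ⟨(∇-iκHA)ψ, (∇-iκHA)φ⟩ = κ² ∫_Ω (1-|ψ|²) ψ φ̄`. -/
def IsGLWeakSolution (Ω : Set (ℝ × ℝ)) (κ H : ℝ)
    (ψ : ℝ × ℝ → ℂ) (A : ℝ × ℝ → ℝ × ℝ) : Prop :=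
  ∀ φ : ℝ × ℝ → ℂ, ContDiff ℝ 2 φ →
    ∫ x in Ω,
        ((magGrad (fun y => (κ * H) • A y) ψ x).1 *
            (starRingEnd ℂ) ((magGrad (fun y => (κ * H) • A y) φ x).1) +
          (magGrad (fun y => (κ * H) • A y) ψ x).2 *
            (starRingEnd ℂ) ((magGrad (fun y => (κ * H) • A y) φ x).2))
      = ((κ : ℂ) ^ 2) *
          ∫ x in Ω, ((1 - (‖ψ x‖ : ℂ) ^ 2) * ψ x * (starRingEnd ℂ) (φ x))

lemma fderiv_coe_mul (f : ℝ×ℝ → ℝ) (u : ℝ×ℝ → ℂ) (x v : ℝ×ℝ)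
    (hf : DifferentiableAt ℝ f x) (hu : DifferentiableAt ℝ u x) :
    fderiv ℝ (fun y => (f y : ℂ) * u y) x v
      = (f x : ℂ) * fderiv ℝ u x v + (fderiv ℝ f x v : ℂ) * u x := by
  have hfc : HasFDerivAt (fun y => ((f y : ℝ) : ℂ)) (Complex.ofRealCLM.comp (fderiv ℝ f x)) x :=
    Complex.ofRealCLM.hasFDerivAt.comp x hf.hasFDerivAt
  rw [fderiv_fun_mul hfc.differentiableAt hu, hfc.fderiv]
  simp [mul_comm]

lemma key_norm (F g : ℝ) (D Ψ : ℂ) :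
    ‖(F:ℂ)*D + (g:ℂ)*Ψ‖^2
      = (D * (starRingEnd ℂ) ((F:ℂ)^2*D + 2*(F:ℂ)*(g:ℂ)*Ψ)).re + g^2*‖Ψ‖^2 := by
  simp only [Complex.sq_norm, Complex.normSq_apply, Complex.mul_re,
    Complex.add_re, Complex.add_im, Complex.mul_im, Complex.ofReal_re, Complex.ofReal_im,
    Complex.conj_re, Complex.conj_im, map_add, map_mul, map_pow, map_ofNat,
    Complex.conj_ofReal, Complex.re_ofNat, Complex.im_ofNat, ← Complex.ofReal_pow]
  ring

lemma key2 (F g1 g2 B1 B2 : ℝ) (d1 d2 Ψ : ℂ) :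
    ‖((F:ℂ)*d1 + (g1:ℂ)*Ψ) - Complex.I*(B1:ℂ)*((F:ℂ)*Ψ)‖^2
      + ‖((F:ℂ)*d2 + (g2:ℂ)*Ψ) - Complex.I*(B2:ℂ)*((F:ℂ)*Ψ)‖^2
    = ((d1 - Complex.I*(B1:ℂ)*Ψ) * (starRingEnd ℂ)
          (((F:ℂ)*((F:ℂ)*d1+(g1:ℂ)*Ψ) + (g1:ℂ)*((F:ℂ)*Ψ)) - Complex.I*(B1:ℂ)*((F:ℂ)*((F:ℂ)*Ψ)))
        + (d2 - Complex.I*(B2:ℂ)*Ψ) * (starRingEnd ℂ)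
          (((F:ℂ)*((F:ℂ)*d2+(g2:ℂ)*Ψ) + (g2:ℂ)*((F:ℂ)*Ψ)) - Complex.I*(B2:ℂ)*((F:ℂ)*((F:ℂ)*Ψ)))).re
      + (g1^2 + g2^2)*‖Ψ‖^2 := by
  have e1 : ((F:ℂ)*d1 + (g1:ℂ)*Ψ) - Complex.I*(B1:ℂ)*((F:ℂ)*Ψ)
      = (F:ℂ)*(d1 - Complex.I*(B1:ℂ)*Ψ) + (g1:ℂ)*Ψ := by ring
  have e2 : ((F:ℂ)*d2 + (g2:ℂ)*Ψ) - Complex.I*(B2:ℂ)*((F:ℂ)*Ψ)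
      = (F:ℂ)*(d2 - Complex.I*(B2:ℂ)*Ψ) + (g2:ℂ)*Ψ := by ring
  have e3 : (((F:ℂ)*((F:ℂ)*d1+(g1:ℂ)*Ψ) + (g1:ℂ)*((F:ℂ)*Ψ)) - Complex.I*(B1:ℂ)*((F:ℂ)*((F:ℂ)*Ψ)))
      = (F:ℂ)^2*(d1 - Complex.I*(B1:ℂ)*Ψ) + 2*(F:ℂ)*(g1:ℂ)*Ψ := by ring
  have e4 : (((F:ℂ)*((F:ℂ)*d2+(g2:ℂ)*Ψ) + (g2:ℂ)*((F:ℂ)*Ψ)) - Complex.I*(B2:ℂ)*((F:ℂ)*((F:ℂ)*Ψ)))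
      = (F:ℂ)^2*(d2 - Complex.I*(B2:ℂ)*Ψ) + 2*(F:ℂ)*(g2:ℂ)*Ψ := by ring
  rw [e1, e2, e3, e4, key_norm, key_norm, Complex.add_re]
  ring

/-- For a weak solution `(ψ, A)` of the Ginzburg-Landau equation with Neumann boundary
condition and any real-valued `f ∈ C²(Ω̄)`:
`∫_Ω |(∇-iκHA)(fψ)|² = κ² ∫_Ω f²(1-|ψ|²)|ψ|² + ∫_Ω |∇f|²|ψ|²`. -/
theorem gl_localized_energy_identity
    (Ω : Set (ℝ × ℝ)) (hΩ : IsOpen Ω) (hΩb : Bornology.IsBounded Ω)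
    (κ H : ℝ) (hκ : 0 < κ) (hH : 0 < H)
    (ψ : ℝ × ℝ → ℂ) (hψ : ContDiff ℝ 2 ψ)
    (A : ℝ × ℝ → ℝ × ℝ) (hA : ContDiff ℝ 1 A)
    (hsol : IsGLWeakSolution Ω κ H ψ A)
    (f : ℝ × ℝ → ℝ) (hf : ContDiff ℝ 2 f) :
    ∫ x in Ω, magGradSq (fun y => (κ * H) • A y) (fun y => (f y : ℂ) * ψ y) x
      = κ ^ 2 * (∫ x in Ω, (f x) ^ 2 * (1 - ‖ψ x‖ ^ 2) * ‖ψ x‖ ^ 2)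
        + ∫ x in Ω, ((fderiv ℝ f x (1, 0)) ^ 2 + (fderiv ℝ f x (0, 1)) ^ 2) * ‖ψ x‖ ^ 2 := by
  set Af : ℝ × ℝ → ℝ × ℝ := fun y => (κ * H) • A y with hAf
  set φ : ℝ × ℝ → ℂ := fun y => (f y : ℂ) * ((f y : ℂ) * ψ y) with hφ
  have hfC : ContDiff ℝ 2 (fun y => ((f y : ℝ) : ℂ)) := Complex.ofRealCLM.contDiff.comp hf
  have hpC : ContDiff ℝ 2 (fun y => (f y : ℂ) * ψ y) := hfC.mul hψ
  have hφC : ContDiff ℝ 2 φ := hfC.mul hpC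
  have hdf : Differentiable ℝ f := hf.differentiable two_ne_zero
  have hdψ : Differentiable ℝ ψ := hψ.differentiable two_ne_zero
  have hdp : Differentiable ℝ (fun y => (f y : ℂ) * ψ y) := hpC.differentiable two_ne_zero
  -- pointwise identity
  have hmain : ∀ x, magGradSq Af (fun y => (f y : ℂ) * ψ y) x
      = ((magGrad Af ψ x).1 * (starRingEnd ℂ) ((magGrad Af φ x).1)
          + (magGrad Af ψ x).2 * (starRingEnd ℂ) ((magGrad Af φ x).2)).re
        + ((fderiv ℝ f x (1, 0)) ^ 2 + (fderiv ℝ f x (0, 1)) ^ 2) * ‖ψ x‖ ^ 2 := by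
    intro x
    simp only [magGradSq, magGrad, hφ]
    rw [fderiv_coe_mul f ψ x (1,0) (hdf x) (hdψ x),
        fderiv_coe_mul f ψ x (0,1) (hdf x) (hdψ x),
        fderiv_coe_mul f (fun y => (f y : ℂ) * ψ y) x (1,0) (hdf x) (hdp x),
        fderiv_coe_mul f (fun y => (f y : ℂ) * ψ y) x (0,1) (hdf x) (hdp x),
        fderiv_coe_mul f ψ x (1,0) (hdf x) (hdψ x),
        fderiv_coe_mul f ψ x (0,1) (hdf x) (hdψ x)]
    exact key2 (f x) (fderiv ℝ f x (1,0)) (fderiv ℝ f x (0,1)) (Af x).1 (Af x).2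
      (fderiv ℝ ψ x (1,0)) (fderiv ℝ ψ x (0,1)) (ψ x)
  -- continuity facts
  have contAf : Continuous Af := (hA.continuous).const_smul (κ * H)
  have hcont_fd : ∀ (u : ℝ×ℝ → ℂ), ContDiff ℝ 2 u → ∀ v : ℝ×ℝ,
      Continuous fun x => fderiv ℝ u x v := fun u hu v =>
    ((hu.fderiv_right (m := 1) (by norm_num)).continuous).clm_apply continuous_const
  have hcont_fdf : ∀ v : ℝ×ℝ, Continuous fun x => fderiv ℝ f x v := fun v =>
    ((hf.fderiv_right (m := 1) (by norm_num)).continuous).clm_apply continuous_const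
  have hA1 : Continuous fun x => ((Af x).1 : ℂ) :=
    Complex.continuous_ofReal.comp (continuous_fst.comp contAf)
  have hA2 : Continuous fun x => ((Af x).2 : ℂ) :=
    Complex.continuous_ofReal.comp (continuous_snd.comp contAf)
  have hmg1 : ∀ (u : ℝ×ℝ → ℂ), ContDiff ℝ 2 u →
      Continuous (fun x => (magGrad Af u x).1) := by
    intro u hu
    simp only [magGrad]
    exact (hcont_fd u hu _).sub ((continuous_const.mul hA1).mul hu.continuous)
  have hmg2 : ∀ (u : ℝ×ℝ → ℂ), ContDiff ℝ 2 u →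
      Continuous (fun x => (magGrad Af u x).2) := by
    intro u hu
    simp only [magGrad]
    exact (hcont_fd u hu _).sub ((continuous_const.mul hA2).mul hu.continuous)
  have hKc : IsCompact (closure Ω) := hΩb.isCompact_closure
  have hintR : ∀ (g : ℝ×ℝ → ℝ), Continuous g → IntegrableOn g Ω := fun g hg =>
    ((hg.continuousOn).integrableOn_compact hKc).mono_set subset_closure
  have hintC : ∀ (g : ℝ×ℝ → ℂ), Continuous g → IntegrableOn g Ω := fun g hg =>
    ((hg.continuousOn).integrableOn_compact hKc).mono_set subset_closure
  have contG2 : Continuous (fun x => (magGrad Af ψ x).1 * (starRingEnd ℂ) ((magGrad Af φ x).1)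
      + (magGrad Af ψ x).2 * (starRingEnd ℂ) ((magGrad Af φ x).2)) :=
    ((hmg1 ψ hψ).mul (continuous_star.comp (hmg1 φ hφC))).add
      ((hmg2 ψ hψ).mul (continuous_star.comp (hmg2 φ hφC)))
  have intG2 : IntegrableOn (fun x => (magGrad Af ψ x).1 * (starRingEnd ℂ) ((magGrad Af φ x).1)
      + (magGrad Af ψ x).2 * (starRingEnd ℂ) ((magGrad Af φ x).2)) Ω := hintC _ contG2
  have intG2re : IntegrableOn (fun x => ((magGrad Af ψ x).1 * (starRingEnd ℂ) ((magGrad Af φ x).1)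
      + (magGrad Af ψ x).2 * (starRingEnd ℂ) ((magGrad Af φ x).2)).re) Ω :=
    hintR _ (Complex.continuous_re.comp contG2)
  have intG3 : IntegrableOn (fun x =>
      ((fderiv ℝ f x (1, 0)) ^ 2 + (fderiv ℝ f x (0, 1)) ^ 2) * ‖ψ x‖ ^ 2) Ω :=
    hintR _ ((((hcont_fdf (1,0)).pow 2).add ((hcont_fdf (0,1)).pow 2)).mul
      ((hψ.continuous.norm).pow 2))
  -- use the weak formulation with test function φ
  have hs := hsol φ hφC
  rw [← hAf] at hs
  have hreal : ∀ x, (1 - (‖ψ x‖ : ℂ) ^ 2) * ψ x * (starRingEnd ℂ) (φ x)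
      = ((f x ^ 2 * (1 - ‖ψ x‖ ^ 2) * ‖ψ x‖ ^ 2 : ℝ) : ℂ) := by
    intro x
    have h1 : ψ x * (starRingEnd ℂ) (ψ x) = ((‖ψ x‖ ^ 2 : ℝ) : ℂ) := by
      rw [Complex.mul_conj]
      norm_cast
      rw [Complex.normSq_eq_norm_sq]
    calc (1 - (‖ψ x‖ : ℂ) ^ 2) * ψ x * (starRingEnd ℂ) (φ x)
        = (1 - (‖ψ x‖ : ℂ) ^ 2) * (f x : ℂ) ^ 2 * (ψ x * (starRingEnd ℂ) (ψ x)) := by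
          simp only [hφ, map_mul, Complex.conj_ofReal]; ring
      _ = ((f x ^ 2 * (1 - ‖ψ x‖ ^ 2) * ‖ψ x‖ ^ 2 : ℝ) : ℂ) := by
          rw [h1]; push_cast; ring
  simp only [hreal] at hs
  have hofr : ∫ x in Ω, ((f x ^ 2 * (1 - ‖ψ x‖ ^ 2) * ‖ψ x‖ ^ 2 : ℝ) : ℂ)
      = ((∫ x in Ω, f x ^ 2 * (1 - ‖ψ x‖ ^ 2) * ‖ψ x‖ ^ 2 : ℝ) : ℂ) := integral_ofReal
  rw [hofr] at hs
  simp only [hmain]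
  rw [integral_add intG2re intG3]
  have hre := integral_re (μ := volume.restrict Ω) intG2
  simp only [RCLike.re_to_complex] at hre
  rw [hre, hs]
  rw [show ((κ:ℂ)^2 * ((∫ x in Ω, f x ^ 2 * (1 - ‖ψ x‖ ^ 2) * ‖ψ x‖ ^ 2 : ℝ) : ℂ))
      = ((κ^2 * ∫ x in Ω, f x ^ 2 * (1 - ‖ψ x‖ ^ 2) * ‖ψ x‖ ^ 2 : ℝ) : ℂ) by push_cast; ring,
    Complex.ofReal_re]
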